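/- arXiv:1308.6067 — 2 statements merged into one kernel-verified Lean document; each statement's English description precedes it below -/
import Mathlib

section
/- Let $n \geq 1$ and let $m, g_1, \ldots, g_n \in \mathbb{C}^d$ be $n+1$ orthonormal vectors. Let $\psi = \frac{1}{\sqrt{2}}\, m \otimes m + \frac{1}{\sqrt{2n}} \sum_{j=1}^n g_j \otimes g_j \in \mathbb{C}^d \otimes \mathbb{C}^d$, and let $\sigma = \frac{1}{2}|m \otimes m\rangle\langle m \otimes m| + \sum_{j=1}^n \frac{1}{2n}|g_j \otimes g_j\rangle\langle g_j \otimes g_j|$. Then $\langle\psi, \sigma\psi\rangle = \frac{1}{4} + \frac{1}{4n}$. -/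
/-- Outer product `|ψ⟩⟨ψ|`. -/
noncomputable def outer {n : Type*} (ψ : n → ℂ) : Matrix n n ℂ :=
  fun i j => ψ i * (starRingEnd ℂ) (ψ j)

private lemma sum_mulVec' {ι N : Type*} [Fintype N] (s : Finset ι)
    (M : ι → Matrix N N ℂ) (v : N → ℂ) :
    (∑ j ∈ s, M j).mulVec v = ∑ j ∈ s, (M j).mulVec v := by
  ext x
  simp only [Matrix.mulVec, dotProduct, Finset.sum_apply, Matrix.sum_apply,
    Finset.sum_mul]
  exact Finset.sum_comm

private lemma quad_outer {N : Type*} [Fintype N] (φ v : N → ℂ) :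
    ∑ x, (starRingEnd ℂ) (v x) * (outer φ).mulVec v x =
      (starRingEnd ℂ) (∑ y, (starRingEnd ℂ) (φ y) * v y) *
        ∑ y, (starRingEnd ℂ) (φ y) * v y := by
  calc ∑ x, (starRingEnd ℂ) (v x) * (outer φ).mulVec v x
      = ∑ x, ∑ y, ((starRingEnd ℂ) (v x) * φ x) * ((starRingEnd ℂ) (φ y) * v y) := by
        simp only [Matrix.mulVec, dotProduct, outer, Finset.mul_sum]
        exact Finset.sum_congr rfl fun x _ => Finset.sum_congr rfl fun y _ => by ring
    _ = (∑ x, (starRingEnd ℂ) (v x) * φ x) * ∑ y, (starRingEnd ℂ) (φ y) * v y :=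
        (Finset.sum_mul_sum _ _ _ _).symm
    _ = (starRingEnd ℂ) (∑ y, (starRingEnd ℂ) (φ y) * v y) *
          ∑ y, (starRingEnd ℂ) (φ y) * v y := by
        congr 1
        rw [map_sum]
        exact Finset.sum_congr rfl fun x _ => by
          simp only [map_mul, Complex.conj_conj]; ring

private lemma tens_ip {d : ℕ} (a b : Fin d → ℂ) :
    ∑ x : Fin d × Fin d, (starRingEnd ℂ) (a x.1 * a x.2) * (b x.1 * b x.2) =
      (∑ i, (starRingEnd ℂ) (a i) * b i) * ∑ i, (starRingEnd ℂ) (a i) * b i := by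
  rw [Fintype.sum_prod_type, Finset.sum_mul_sum]
  exact Finset.sum_congr rfl fun i _ => Finset.sum_congr rfl fun j _ => by
    simp only [map_mul]; ring

private lemma psi_ip {n d : ℕ} (m : Fin d → ℂ) (g : Fin n → Fin d → ℂ) (α β : ℂ)
    (a : Fin d → ℂ) :
    ∑ y : Fin d × Fin d, (starRingEnd ℂ) (a y.1 * a y.2) *
        (α * (m y.1 * m y.2) + β * ∑ j, g j y.1 * g j y.2) =
      α * ((∑ i, (starRingEnd ℂ) (a i) * m i) * ∑ i, (starRingEnd ℂ) (a i) * m i) +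
      β * ∑ j, (∑ i, (starRingEnd ℂ) (a i) * g j i) * ∑ i, (starRingEnd ℂ) (a i) * g j i := by
  simp only [mul_add, Finset.sum_add_distrib]
  congr 1
  · rw [← tens_ip a m, Finset.mul_sum]
    exact Finset.sum_congr rfl fun y _ => by ring
  · calc ∑ y : Fin d × Fin d, (starRingEnd ℂ) (a y.1 * a y.2) * (β * ∑ j, g j y.1 * g j y.2)
        = ∑ y : Fin d × Fin d, ∑ j, β * ((starRingEnd ℂ) (a y.1 * a y.2) * (g j y.1 * g j y.2)) := by
          refine Finset.sum_congr rfl fun y _ => ?_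
          rw [Finset.mul_sum, Finset.mul_sum]
          exact Finset.sum_congr rfl fun j _ => by ring
      _ = ∑ j, ∑ y : Fin d × Fin d, β * ((starRingEnd ℂ) (a y.1 * a y.2) * (g j y.1 * g j y.2)) :=
          Finset.sum_comm
      _ = β * ∑ j, (∑ i, (starRingEnd ℂ) (a i) * g j i) * ∑ i, (starRingEnd ℂ) (a i) * g j i := by
          rw [Finset.mul_sum]
          exact Finset.sum_congr rfl fun j _ => by rw [← Finset.mul_sum, tens_ip]

theorem improved_sealing_acceptance
    {n d : ℕ} (hn : 1 ≤ n)
    (m : Fin d → ℂ) (g : Fin n → Fin d → ℂ)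
    (hm : ∑ i, Complex.normSq (m i) = 1)
    (hg : ∀ j, ∑ i, Complex.normSq (g j i) = 1)
    (hmg : ∀ j, ∑ i, (starRingEnd ℂ) (m i) * g j i = 0)
    (hgg : ∀ j k, j ≠ k → ∑ i, (starRingEnd ℂ) (g j i) * g k i = 0)
    (ψ : Fin d × Fin d → ℂ)
    (hψ : ψ = fun x => ((Real.sqrt 2 : ℂ))⁻¹ * (m x.1 * m x.2) +
        ((Real.sqrt (2 * n) : ℂ))⁻¹ * ∑ j, g j x.1 * g j x.2)
    (σ : Matrix (Fin d × Fin d) (Fin d × Fin d) ℂ)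
    (hσ : σ = ((1 : ℝ) / 2) • outer (fun x => m x.1 * m x.2) +
        ∑ j, ((1 : ℝ) / (2 * n)) • outer (fun x => g j x.1 * g j x.2)) :
    ∑ x, (starRingEnd ℂ) (ψ x) * σ.mulVec ψ x = 1 / 4 + 1 / (4 * n) := by
  have hn0 : (n : ℂ) ≠ 0 := Nat.cast_ne_zero.mpr (by omega)
  set α : ℂ := ((Real.sqrt 2 : ℂ))⁻¹ with hα
  set β : ℂ := ((Real.sqrt (2 * n) : ℂ))⁻¹ with hβ
  -- orthonormality in complex form
  have cmm : ∑ i, (starRingEnd ℂ) (m i) * m i = 1 := by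
    have : ∀ i, (starRingEnd ℂ) (m i) * m i = (Complex.normSq (m i) : ℂ) := fun i =>
      (Complex.normSq_eq_conj_mul_self).symm
    simp only [this]
    rw [← Complex.ofReal_sum, hm, Complex.ofReal_one]
  have cgg : ∀ j, ∑ i, (starRingEnd ℂ) (g j i) * g j i = 1 := by
    intro j
    have : ∀ i, (starRingEnd ℂ) (g j i) * g j i = (Complex.normSq (g j i) : ℂ) := fun i =>
      (Complex.normSq_eq_conj_mul_self).symm
    simp only [this]
    rw [← Complex.ofReal_sum, hg j, Complex.ofReal_one]
  have cgm : ∀ j, ∑ i, (starRingEnd ℂ) (g j i) * m i = 0 := by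
    intro j
    have : ∑ i, (starRingEnd ℂ) (g j i) * m i =
        (starRingEnd ℂ) (∑ i, (starRingEnd ℂ) (m i) * g j i) := by
      rw [map_sum]
      exact Finset.sum_congr rfl fun i _ => by
        simp only [map_mul, Complex.conj_conj]; ring
    rw [this, hmg j, map_zero]
  -- the two inner products with ψ
  have Sm : ∑ y, (starRingEnd ℂ) (m y.1 * m y.2) * ψ y = α := by
    rw [hψ]
    simp only
    rw [psi_ip m g α β m, cmm]
    simp only [hmg, mul_zero, zero_mul, Finset.sum_const_zero, mul_one, add_zero]
  have Sg : ∀ j, ∑ y, (starRingEnd ℂ) (g j y.1 * g j y.2) * ψ y = β := by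
    intro j
    rw [hψ]
    simp only
    rw [psi_ip m g α β (g j), cgm j]
    have : ∑ k, (∑ i, (starRingEnd ℂ) (g j i) * g k i) * ∑ i, (starRingEnd ℂ) (g j i) * g k i
        = 1 := by
      rw [Finset.sum_eq_single j]
      · rw [cgg j]; ring
      · intro k _ hk
        rw [hgg j k (Ne.symm hk)]; ring
      · intro h; exact absurd (Finset.mem_univ j) h
    rw [this]
    ring
  -- conjugates of the real constants
  have hconjα : (starRingEnd ℂ) α = α := by
    rw [hα, map_inv₀, Complex.conj_ofReal]
  have hconjβ : (starRingEnd ℂ) β = β := by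
    rw [hβ, map_inv₀, Complex.conj_ofReal]
  have hαα : α * α = (2 : ℂ)⁻¹ := by
    rw [hα, ← mul_inv, ← Complex.ofReal_mul, Real.mul_self_sqrt (by norm_num)]
    norm_num
  have hββ : β * β = ((2 * n : ℝ) : ℂ)⁻¹ := by
    rw [hβ, ← mul_inv, ← Complex.ofReal_mul, Real.mul_self_sqrt (by positivity)]
  -- expand the quadratic form
  rw [hσ, Matrix.add_mulVec, sum_mulVec']
  simp only [Matrix.smul_mulVec, Pi.add_apply, Finset.sum_apply, Pi.smul_apply,
    Complex.real_smul, mul_add, Finset.mul_sum, Finset.sum_add_distrib]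
  push_cast
  have T1 : ∑ x, (starRingEnd ℂ) (ψ x) *
        ((1 : ℂ) / 2 * (outer (fun x => m x.1 * m x.2)).mulVec ψ x) =
      (1 : ℂ) / 2 * (α * α) := by
    calc ∑ x, (starRingEnd ℂ) (ψ x) *
          ((1 : ℂ) / 2 * (outer (fun x => m x.1 * m x.2)).mulVec ψ x)
        = (1 : ℂ) / 2 * ∑ x, (starRingEnd ℂ) (ψ x) *
            (outer (fun x => m x.1 * m x.2)).mulVec ψ x := by
          rw [Finset.mul_sum]
          exact Finset.sum_congr rfl fun x _ => by ring
      _ = (1 : ℂ) / 2 * (α * α) := by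
          rw [quad_outer]
          rw [show (∑ y, (starRingEnd ℂ) ((fun x : Fin d × Fin d => m x.1 * m x.2) y) * ψ y) = α
            from Sm]
          rw [hconjα]
  have T2 : ∑ x, ∑ j, (starRingEnd ℂ) (ψ x) *
        ((1 : ℂ) / (2 * (n : ℂ)) * (outer (fun x => g j x.1 * g j x.2)).mulVec ψ x) =
      ∑ j : Fin n, (1 : ℂ) / (2 * (n : ℂ)) * (β * β) := by
    rw [Finset.sum_comm]
    refine Finset.sum_congr rfl fun j _ => ?_
    calc ∑ x, (starRingEnd ℂ) (ψ x) *
          ((1 : ℂ) / (2 * (n : ℂ)) * (outer (fun x => g j x.1 * g j x.2)).mulVec ψ x)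
        = (1 : ℂ) / (2 * (n : ℂ)) * ∑ x, (starRingEnd ℂ) (ψ x) *
            (outer (fun x => g j x.1 * g j x.2)).mulVec ψ x := by
          rw [Finset.mul_sum]
          exact Finset.sum_congr rfl fun x _ => by ring
      _ = (1 : ℂ) / (2 * (n : ℂ)) * (β * β) := by
          rw [quad_outer]
          rw [show (∑ y, (starRingEnd ℂ) ((fun x : Fin d × Fin d => g j x.1 * g j x.2) y) * ψ y) = β
            from Sg j]
          rw [hconjβ]
  rw [T1, T2, hαα, hββ, Finset.sum_const, Finset.card_univ, Fintype.card_fin]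
  push_cast
  field_simp
  ring_nf
  field_simp
  ring
end

section
/- Let $n \geq 1$, let $e_1, \ldots, e_n \in \mathbb{C}^{d_B}$ be orthonormal vectors, and let $m_1, \ldots, m_n \in \mathbb{C}^{d_C}$ be unit vectors. Let $\psi = \frac{1}{\sqrt{n}} \sum_{i=1}^n e_i \otimes m_i \in \mathbb{C}^{d_B} \otimes \mathbb{C}^{d_C}$ (a unit vector). Then for every index $i \in \{1, \ldots, n\}$ and every density matrix $\rho$ on $\mathbb{C}^{d_C}$, $\langle\psi, (|e_i\rangle\langle e_i| \otimes \rho)\,\psi\rangle = \frac{1}{n}\langle m_i, \rho\, m_i\rangle \leq \frac{1}{n}$. -/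
open scoped Kronecker ComplexOrder

theorem multiple_pictures_security
    {n dB dC : ℕ} (hn : 1 ≤ n)
    (e : Fin n → Fin dB → ℂ)
    (he : ∀ i, ∑ b, Complex.normSq (e i b) = 1)
    (heo : ∀ i j, i ≠ j → ∑ b, (starRingEnd ℂ) (e i b) * e j b = 0)
    (m : Fin n → Fin dC → ℂ)
    (hm : ∀ i, ∑ c, Complex.normSq (m i c) = 1)
    (ψ : Fin dB × Fin dC → ℂ)
    (hψ : ψ = fun x => ((Real.sqrt n : ℂ))⁻¹ * ∑ i, e i x.1 * m i x.2)
    (i : Fin n)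
    (ρ : Matrix (Fin dC) (Fin dC) ℂ)
    (hρ : ρ.PosSemidef) (hρtr : ρ.trace = 1) :
    (∑ x, (starRingEnd ℂ) (ψ x) * ((outer (e i) ⊗ₖ ρ).mulVec ψ) x) =
        ((n : ℂ))⁻¹ * ∑ c, (starRingEnd ℂ) (m i c) * ρ.mulVec (m i) c ∧
      (∑ x, (starRingEnd ℂ) (ψ x) * ((outer (e i) ⊗ₖ ρ).mulVec ψ) x).re ≤ 1 / n := by
  set s : ℂ := ((Real.sqrt n : ℂ))⁻¹ with hs
  have hsconj : (starRingEnd ℂ) s = s := by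
    rw [hs, map_inv₀, Complex.conj_ofReal]
  have hss : s * s = ((n : ℂ))⁻¹ := by
    rw [hs, ← mul_inv, ← Complex.ofReal_mul, Real.mul_self_sqrt (Nat.cast_nonneg n)]
    norm_num
  have hdiag : (∑ b, (starRingEnd ℂ) (e i b) * e i b) = 1 := by
    have h1 : (∑ b, (starRingEnd ℂ) (e i b) * e i b)
        = ((∑ b, Complex.normSq (e i b) : ℝ) : ℂ) := by
      push_cast
      refine Finset.sum_congr rfl fun b _ => ?_
      rw [mul_comm, Complex.mul_conj]
    rw [h1, he i, Complex.ofReal_one]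
  have key : ∀ c, (∑ b, (starRingEnd ℂ) (e i b) * ψ (b, c)) = s * m i c := by
    intro c
    calc ∑ b, (starRingEnd ℂ) (e i b) * ψ (b, c)
        = s * ∑ j, (∑ b, (starRingEnd ℂ) (e i b) * e j b) * m j c := by
          rw [hψ]
          simp only [Finset.mul_sum, Finset.sum_mul]
          rw [Finset.sum_comm]
          exact Finset.sum_congr rfl fun j _ => Finset.sum_congr rfl fun b _ => by ring
      _ = s * ((∑ b, (starRingEnd ℂ) (e i b) * e i b) * m i c) := by
          congr 1
          rw [Finset.sum_eq_single i]
          · intro j _ hj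
            rw [heo i j (fun h => hj h.symm), zero_mul]
          · intro h; exact absurd (Finset.mem_univ i) h
      _ = s * m i c := by rw [hdiag, one_mul]
  have key2 : ∀ c, (∑ b, (starRingEnd ℂ) (ψ (b, c)) * e i b)
      = s * (starRingEnd ℂ) (m i c) := by
    intro c
    calc ∑ b, (starRingEnd ℂ) (ψ (b, c)) * e i b
        = (starRingEnd ℂ) (∑ b, (starRingEnd ℂ) (e i b) * ψ (b, c)) := by
          rw [map_sum]
          refine Finset.sum_congr rfl fun b _ => ?_
          rw [map_mul, Complex.conj_conj]; ring
      _ = s * (starRingEnd ℂ) (m i c) := by rw [key c, map_mul, hsconj]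
  have expand : ∀ b c, ((outer (e i) ⊗ₖ ρ).mulVec ψ) (b, c)
      = e i b * (s * ρ.mulVec (m i) c) := by
    intro b c
    have h1 : ((outer (e i) ⊗ₖ ρ).mulVec ψ) (b, c)
        = ∑ c', ∑ b', (e i b * (starRingEnd ℂ) (e i b')) * ρ c c' * ψ (b', c') := by
      simp only [Matrix.mulVec, dotProduct, Fintype.sum_prod_type,
        Matrix.kroneckerMap_apply, outer]
      rw [Finset.sum_comm]
    rw [h1]
    calc ∑ c', ∑ b', (e i b * (starRingEnd ℂ) (e i b')) * ρ c c' * ψ (b', c')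
        = ∑ c', e i b * ρ c c' * ∑ b', (starRingEnd ℂ) (e i b') * ψ (b', c') := by
          refine Finset.sum_congr rfl fun c' _ => ?_
          rw [Finset.mul_sum]
          exact Finset.sum_congr rfl fun b' _ => by ring
      _ = e i b * (s * ∑ c', ρ c c' * m i c') := by
          rw [Finset.mul_sum, Finset.mul_sum]
          refine Finset.sum_congr rfl fun c' _ => ?_
          rw [key c']; ring
      _ = e i b * (s * ρ.mulVec (m i) c) := rfl
  have main : (∑ x, (starRingEnd ℂ) (ψ x) * ((outer (e i) ⊗ₖ ρ).mulVec ψ) x)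
      = ((n : ℂ))⁻¹ * ∑ c, (starRingEnd ℂ) (m i c) * ρ.mulVec (m i) c := by
    calc ∑ x, (starRingEnd ℂ) (ψ x) * ((outer (e i) ⊗ₖ ρ).mulVec ψ) x
        = ∑ c, ∑ b, (starRingEnd ℂ) (ψ (b, c)) * (e i b * (s * ρ.mulVec (m i) c)) := by
          rw [Fintype.sum_prod_type, Finset.sum_comm]
          exact Finset.sum_congr rfl fun c _ => Finset.sum_congr rfl fun b _ => by
            rw [expand]
      _ = ∑ c, (s * ρ.mulVec (m i) c) * ∑ b, (starRingEnd ℂ) (ψ (b, c)) * e i b := by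
          refine Finset.sum_congr rfl fun c _ => ?_
          rw [Finset.mul_sum]
          exact Finset.sum_congr rfl fun b _ => by ring
      _ = ∑ c, (s * s) * ((starRingEnd ℂ) (m i c) * ρ.mulVec (m i) c) := by
          refine Finset.sum_congr rfl fun c _ => ?_
          rw [key2 c]; ring
      _ = ((n : ℂ))⁻¹ * ∑ c, (starRingEnd ℂ) (m i c) * ρ.mulVec (m i) c := by
          rw [← Finset.mul_sum, hss]
  refine ⟨main, ?_⟩
  rw [main]
  obtain ⟨B, hB⟩ : ∃ B : Matrix (Fin dC) (Fin dC) ℂ, ρ = B.conjTranspose * B := by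
    open scoped MatrixOrder Matrix.Norms.L2Operator in
    obtain ⟨B, hB⟩ := CStarAlgebra.nonneg_iff_eq_star_mul_self.mp hρ.nonneg
    exact ⟨B, by rw [hB, Matrix.star_eq_conjTranspose]⟩
  set w : Fin dC → ℂ := fun k => ∑ c, B k c * m i c with hw
  have hT2 : (∑ c, (starRingEnd ℂ) (m i c) * ρ.mulVec (m i) c)
      = ((∑ k, Complex.normSq (w k) : ℝ) : ℂ) := by
    have hρapp : ∀ c, ρ.mulVec (m i) c
        = ∑ c', ∑ k, (starRingEnd ℂ) (B k c) * B k c' * m i c' := by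
      intro c
      simp only [hB, Matrix.mulVec, dotProduct, Matrix.mul_apply,
        Matrix.conjTranspose_apply, Finset.sum_mul, Complex.star_def]
    calc ∑ c, (starRingEnd ℂ) (m i c) * ρ.mulVec (m i) c
        = ∑ c, ∑ c', ∑ k,
            (starRingEnd ℂ) (m i c) * ((starRingEnd ℂ) (B k c) * B k c' * m i c') := by
          refine Finset.sum_congr rfl fun c _ => ?_
          rw [hρapp c, Finset.mul_sum]
          exact Finset.sum_congr rfl fun c' _ => by rw [Finset.mul_sum]
      _ = ∑ k, ∑ c, ∑ c',
            (starRingEnd ℂ) (m i c) * ((starRingEnd ℂ) (B k c) * B k c' * m i c') := by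
          rw [show (∑ c, ∑ c', ∑ k,
              (starRingEnd ℂ) (m i c) * ((starRingEnd ℂ) (B k c) * B k c' * m i c'))
              = ∑ c, ∑ k, ∑ c',
              (starRingEnd ℂ) (m i c) * ((starRingEnd ℂ) (B k c) * B k c' * m i c')
            from Finset.sum_congr rfl fun c _ => Finset.sum_comm]
          exact Finset.sum_comm
      _ = ∑ k, (starRingEnd ℂ) (w k) * w k := by
          refine Finset.sum_congr rfl fun k _ => ?_
          simp only [hw]
          rw [map_sum, Finset.sum_mul]
          refine Finset.sum_congr rfl fun c _ => ?_
          rw [Finset.mul_sum]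
          refine Finset.sum_congr rfl fun c' _ => ?_
          rw [map_mul]; ring
      _ = ((∑ k, Complex.normSq (w k) : ℝ) : ℂ) := by
          push_cast
          refine Finset.sum_congr rfl fun k _ => ?_
          rw [mul_comm, Complex.mul_conj]
  have htr : (∑ k, ∑ c, Complex.normSq (B k c)) = 1 := by
    have h1 : ρ.trace = ((∑ k, ∑ c, Complex.normSq (B k c) : ℝ) : ℂ) := by
      rw [hB]
      simp only [Matrix.trace, Matrix.diag, Matrix.mul_apply, Matrix.conjTranspose_apply,
        Complex.star_def]
      push_cast
      rw [Finset.sum_comm]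
      exact Finset.sum_congr rfl fun k _ => Finset.sum_congr rfl fun c _ => by
        rw [mul_comm, Complex.mul_conj]
    rw [h1] at hρtr
    exact_mod_cast hρtr
  have hbound : (∑ k, Complex.normSq (w k)) ≤ 1 := by
    rw [← htr]
    refine Finset.sum_le_sum fun k _ => ?_
    have hns : ∀ z : ℂ, Complex.normSq z = ‖z‖ ^ 2 := fun z => by
      rw [Complex.normSq_eq_norm_sq]
    have h1 : ‖w k‖ ≤ ∑ c, ‖B k c‖ * ‖m i c‖ := by
      simp only [hw]
      refine (norm_sum_le _ _).trans_eq ?_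
      exact Finset.sum_congr rfl fun c _ => norm_mul _ _
    have h2 : Complex.normSq (w k) ≤ (∑ c, ‖B k c‖ * ‖m i c‖) ^ 2 := by
      rw [hns]
      exact pow_le_pow_left₀ (norm_nonneg _) h1 2
    have h3 : (∑ c, ‖B k c‖ * ‖m i c‖) ^ 2
        ≤ (∑ c, ‖B k c‖ ^ 2) * ∑ c, ‖m i c‖ ^ 2 :=
      Finset.sum_mul_sq_le_sq_mul_sq _ _ _
    have h4 : (∑ c, ‖m i c‖ ^ 2) = 1 := by
      rw [← hm i]
      exact Finset.sum_congr rfl fun c _ => (hns _).symm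
    have h5 : (∑ c, ‖B k c‖ ^ 2) = ∑ c, Complex.normSq (B k c) :=
      Finset.sum_congr rfl fun c _ => (hns _).symm
    calc Complex.normSq (w k) ≤ _ := h2
      _ ≤ _ := h3
      _ = ∑ c, Complex.normSq (B k c) := by rw [h4, h5, mul_one]
  rw [hT2]
  have : ((n : ℂ))⁻¹ * ((∑ k, Complex.normSq (w k) : ℝ) : ℂ)
      = (((n : ℝ))⁻¹ * (∑ k, Complex.normSq (w k)) : ℝ) := by
    push_cast; ring
  rw [this, Complex.ofReal_re]
  rw [one_div]
  calc ((n : ℝ))⁻¹ * (∑ k, Complex.normSq (w k))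
      ≤ ((n : ℝ))⁻¹ * 1 := by
        exact mul_le_mul_of_nonneg_left hbound (by positivity)
    _ = ((n : ℝ))⁻¹ := mul_one _
end
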